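/- Let (n_ν : ν ∈ ℕ) be a strictly increasing sequence of nonnegative integers, let Mf(x) = sup_{N≥1} N^{−1} |Σ_{ν=1}^N f(x + n_ν)|, and for k ≥ 0 let A_k f(x) = 2^{−k} Σ_{ν=2^k+1}^{2^{k+1}} f(x + n_ν). Then M is of weak type (1,1) on ℤ if and only if the maximal operator f ↦ sup_{k≥0} |A_k f| is of weak type (1,1) on ℤ. -/

import Mathlib

open Finset

/-- Level sets of a summable function are finite with a Chebyshev bound. -/
lemma level_set_bound (g : ℤ → ℝ) (hg : Summable fun x => |g x|) {β : ℝ} (hβ : 0 < β) :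
    ∃ hfin : {x : ℤ | β < |g x|}.Finite,
      (hfin.toFinset.card : ℝ) ≤ β⁻¹ * ∑' x, |g x| := by
  have hcof : (fun x => |g x|) ⁻¹' Set.Iio β ∈ Filter.cofinite :=
    hg.tendsto_cofinite_zero (Iio_mem_nhds hβ)
  rw [Filter.mem_cofinite] at hcof
  have hfin : {x : ℤ | β < |g x|}.Finite := by
    apply hcof.subset
    intro x hx
    simp only [Set.mem_compl_iff, Set.mem_preimage, Set.mem_Iio, not_lt]
    exact le_of_lt hx
  refine ⟨hfin, ?_⟩
  have h1 : (hfin.toFinset.card : ℝ) * β ≤ ∑ x ∈ hfin.toFinset, |g x| := by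
    calc (hfin.toFinset.card : ℝ) * β = ∑ _x ∈ hfin.toFinset, β := by
          rw [Finset.sum_const, nsmul_eq_mul]
      _ ≤ ∑ x ∈ hfin.toFinset, |g x| :=
          Finset.sum_le_sum (fun x hx => le_of_lt (by simpa using hfin.mem_toFinset.mp hx))
  have h2 : ∑ x ∈ hfin.toFinset, |g x| ≤ ∑' x, |g x| :=
    Summable.sum_le_tsum _ (fun x _ => abs_nonneg _) hg
  rw [inv_mul_eq_div, le_div_iff₀ hβ]
  linarith

/-- Decomposition of `range (2^(k+1))` into `{0}` and dyadic blocks. -/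
lemma sum_range_two_pow (h : ℕ → ℝ) (k : ℕ) :
    ∑ ν ∈ Finset.range (2 ^ (k + 1)), h ν
      = h 0 + ∑ j ∈ Finset.range (k + 1), ∑ ν ∈ Finset.Ico (2 ^ j) (2 ^ (j + 1)), h ν := by
  induction k with
  | zero =>
      norm_num [Finset.sum_range_succ, Finset.sum_Ico_eq_sum_range]
  | succ k ih =>
      rw [Finset.sum_range_succ (fun j => ∑ ν ∈ Finset.Ico (2 ^ j) (2 ^ (j + 1)), h ν) (k + 1),
        ← add_assoc, ← ih,
        ← Finset.sum_range_add_sum_Ico h (Nat.pow_le_pow_right (by norm_num) (Nat.le_succ _))]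

theorem weak_type_iff_dyadic_weak_type (n : ℕ → ℕ) (hmono : StrictMono n) :
    (∃ C : ℝ, ∀ f : ℤ → ℝ, Summable (fun x => |f x|) → ∀ α : ℝ, 0 < α →
      ∃ hfin : {x : ℤ | ∃ N : ℕ, 1 ≤ N ∧
          α < ((N : ℝ))⁻¹ * |∑ ν ∈ Finset.range N, f (x + n ν)|}.Finite,
        (hfin.toFinset.card : ℝ) ≤ C * α⁻¹ * ∑' x, |f x|)
    ↔
    (∃ C : ℝ, ∀ f : ℤ → ℝ, Summable (fun x => |f x|) → ∀ α : ℝ, 0 < α →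
      ∃ hfin : {x : ℤ | ∃ k : ℕ,
          α < ((2 ^ k : ℝ))⁻¹ * |∑ ν ∈ Finset.Ico (2 ^ k) (2 ^ (k + 1)), f (x + n ν)|}.Finite,
        (hfin.toFinset.card : ℝ) ≤ C * α⁻¹ * ∑' x, |f x|) := by
  constructor
  · -- M weak (1,1) ⟹ dyadic weak (1,1), with constant 4C
    rintro ⟨C, hC⟩
    refine ⟨4 * C, fun f hf α hα => ?_⟩
    obtain ⟨hMfin, hMcard⟩ := hC f hf (α / 4) (by linarith)
    have hsub : {x : ℤ | ∃ k : ℕ,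
        α < ((2 ^ k : ℝ))⁻¹ * |∑ ν ∈ Finset.Ico (2 ^ k) (2 ^ (k + 1)), f (x + n ν)|} ⊆
        {x : ℤ | ∃ N : ℕ, 1 ≤ N ∧
          α / 4 < ((N : ℝ))⁻¹ * |∑ ν ∈ Finset.range N, f (x + n ν)|} := by
      rintro x ⟨k, hk⟩
      have hle : (2 : ℕ) ^ k ≤ 2 ^ (k + 1) := Nat.pow_le_pow_right (by norm_num) (Nat.le_succ _)
      rw [Finset.sum_Ico_eq_sub _ hle] at hk
      set a := |∑ ν ∈ Finset.range (2 ^ (k + 1)), f (x + n ν)| with ha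
      set b := |∑ ν ∈ Finset.range (2 ^ k), f (x + n ν)| with hb
      have htri : |∑ ν ∈ Finset.range (2 ^ (k + 1)), f (x + n ν)
          - ∑ ν ∈ Finset.range (2 ^ k), f (x + n ν)| ≤ a + b := abs_sub _ _
      have hp : (0:ℝ) < (2:ℝ) ^ k := by positivity
      have hk' : α < ((2:ℝ) ^ k)⁻¹ * (a + b) :=
        lt_of_lt_of_le hk (by
          exact mul_le_mul_of_nonneg_left htri (by positivity))
      rcases lt_or_ge (α / 2) (((2:ℝ) ^ k)⁻¹ * b) with hcase | hcase
      · refine ⟨2 ^ k, Nat.one_le_two_pow, ?_⟩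
        have : ((2 ^ k : ℕ) : ℝ)⁻¹ = ((2:ℝ) ^ k)⁻¹ := by push_cast; ring
        rw [this]
        calc α / 4 < α / 2 := by linarith
          _ < ((2:ℝ) ^ k)⁻¹ * b := hcase
      · refine ⟨2 ^ (k + 1), Nat.one_le_two_pow, ?_⟩
        have h1 : α / 2 < ((2:ℝ) ^ k)⁻¹ * a := by
          have := mul_add (((2:ℝ) ^ k)⁻¹) a b
          nlinarith [hk']
        have h2 : ((2 ^ (k+1) : ℕ) : ℝ)⁻¹ = ((2:ℝ) ^ k)⁻¹ / 2 := by
          push_cast; rw [pow_succ]; field_simp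
        rw [h2]
        calc α / 4 < (((2:ℝ) ^ k)⁻¹ * a) / 2 := by linarith
          _ = ((2:ℝ) ^ k)⁻¹ / 2 * a := by ring
    have hfin := hMfin.subset hsub
    refine ⟨hfin, ?_⟩
    have hcard : hfin.toFinset.card ≤ hMfin.toFinset.card :=
      Finset.card_le_card (Set.Finite.toFinset_subset_toFinset.mpr hsub)
    have h4 : C * (α / 4)⁻¹ * ∑' x, |f x| = 4 * C * α⁻¹ * ∑' x, |f x| := by
      rw [inv_div]; ring
    calc (hfin.toFinset.card : ℝ) ≤ (hMfin.toFinset.card : ℝ) := by exact_mod_cast hcard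
      _ ≤ C * (α / 4)⁻¹ * ∑' x, |f x| := hMcard
      _ = 4 * C * α⁻¹ * ∑' x, |f x| := h4
  · -- dyadic weak (1,1) ⟹ M weak (1,1), with constant 4C + 2
    rintro ⟨C, hC⟩
    refine ⟨4 * C + 2, fun f hf α hα => ?_⟩
    set g : ℤ → ℝ := fun y => |f y| with hg
    have hgsum : Summable fun x => |g x| := by simpa [hg, abs_abs] using hf
    have hgt : ∑' x, |g x| = ∑' x, |f x| := by simp [hg, abs_abs]
    obtain ⟨hDfin, hDcard⟩ := hC g hgsum (α / 4) (by linarith)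
    -- level set for the translated function
    have hsum0 : Summable fun x => |f (x + (n 0 : ℤ))| := by
      have h := (Equiv.addRight ((n 0 : ℕ) : ℤ)).summable_iff (f := fun x : ℤ => |f x|)
      exact h.mpr hf
    obtain ⟨hEfin, hEcard⟩ := level_set_bound (fun x => f (x + (n 0 : ℤ))) hsum0
      (show (0:ℝ) < α / 2 by linarith)
    have htsum0 : ∑' x, |f (x + (n 0 : ℤ))| = ∑' x, |f x| := by
      have h := (Equiv.addRight ((n 0 : ℕ) : ℤ)).tsum_eq (fun y : ℤ => |f y|)
      simpa using h
    -- the inclusion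
    have hsub : {x : ℤ | ∃ N : ℕ, 1 ≤ N ∧
          α < ((N : ℝ))⁻¹ * |∑ ν ∈ Finset.range N, f (x + n ν)|} ⊆
        {x : ℤ | ∃ k : ℕ,
          α / 4 < ((2 ^ k : ℝ))⁻¹ * |∑ ν ∈ Finset.Ico (2 ^ k) (2 ^ (k + 1)), g (x + n ν)|} ∪
        {x : ℤ | α / 2 < |f (x + (n 0 : ℤ))|} := by
      rintro x ⟨N, hN1, hNα⟩
      by_contra hx
      simp only [Set.mem_union, Set.mem_setOf_eq, not_or, not_exists, not_lt] at hx
      obtain ⟨hxD, hxE⟩ := hx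
      set k := Nat.log 2 N with hkdef
      have hk1 : 2 ^ k ≤ N := Nat.pow_log_le_self 2 (by omega)
      have hk2 : N < 2 ^ (k + 1) := Nat.lt_pow_succ_log_self (by norm_num) N
      have hNpos : (0:ℝ) < (N : ℝ) := by exact_mod_cast hN1
      have hp : (0:ℝ) < (2:ℝ) ^ k := by positivity
      -- step 1 : α < N⁻¹ ∑ g
      have step1 : α < ((N : ℝ))⁻¹ * ∑ ν ∈ Finset.range N, g (x + n ν) := by
        refine lt_of_lt_of_le hNα ?_
        refine mul_le_mul_of_nonneg_left ?_ (by positivity)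
        exact Finset.abs_sum_le_sum_abs _ _
      -- step 2 : N⁻¹ ∑_{range N} g ≤ (2^k)⁻¹ ∑_{range 2^(k+1)} g
      have step2 : ((N : ℝ))⁻¹ * ∑ ν ∈ Finset.range N, g (x + n ν) ≤
          ((2:ℝ) ^ k)⁻¹ * ∑ ν ∈ Finset.range (2 ^ (k + 1)), g (x + n ν) := by
        have hmono' : ∑ ν ∈ Finset.range N, g (x + n ν) ≤
            ∑ ν ∈ Finset.range (2 ^ (k + 1)), g (x + n ν) :=
          Finset.sum_le_sum_of_subset_of_nonneg
            (Finset.range_subset_range.mpr hk2.le) (fun i _ _ => abs_nonneg _)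
        have hinv : ((N : ℝ))⁻¹ ≤ ((2:ℝ) ^ k)⁻¹ := by
          apply inv_anti₀ hp
          exact_mod_cast hk1
        have hnn : 0 ≤ ∑ ν ∈ Finset.range N, g (x + n ν) :=
          Finset.sum_nonneg (fun i _ => abs_nonneg _)
        calc ((N : ℝ))⁻¹ * ∑ ν ∈ Finset.range N, g (x + n ν)
            ≤ ((2:ℝ) ^ k)⁻¹ * ∑ ν ∈ Finset.range N, g (x + n ν) :=
              mul_le_mul_of_nonneg_right hinv hnn
          _ ≤ ((2:ℝ) ^ k)⁻¹ * ∑ ν ∈ Finset.range (2 ^ (k + 1)), g (x + n ν) :=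
              mul_le_mul_of_nonneg_left hmono' (by positivity)
      -- step 3 : decompose and bound
      have hdec := sum_range_two_pow (fun ν => g (x + n ν)) k
      have hblock : ∀ j : ℕ, ∑ ν ∈ Finset.Ico (2 ^ j) (2 ^ (j + 1)), g (x + n ν)
          ≤ α / 4 * 2 ^ j := by
        intro j
        have hj := hxD j
        have habs : |∑ ν ∈ Finset.Ico (2 ^ j) (2 ^ (j + 1)), g (x + n ν)|
            = ∑ ν ∈ Finset.Ico (2 ^ j) (2 ^ (j + 1)), g (x + n ν) :=
          abs_of_nonneg (Finset.sum_nonneg (fun i _ => abs_nonneg _))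
        rw [habs] at hj
        have hpj : (0:ℝ) < (2:ℝ) ^ j := by positivity
        rw [inv_mul_le_iff₀ hpj] at hj
        linarith [hj]
      have hgeom : ∑ j ∈ Finset.range (k + 1), ((2:ℝ)) ^ j = 2 ^ (k + 1) - 1 := by
        have := geom_sum_eq (show (2:ℝ) ≠ 1 by norm_num) (k + 1)
        rw [this]; norm_num
      have hsumblocks : ∑ j ∈ Finset.range (k + 1),
          ∑ ν ∈ Finset.Ico (2 ^ j) (2 ^ (j + 1)), g (x + n ν) ≤ α / 4 * (2 ^ (k + 1) - 1) := by
        calc ∑ j ∈ Finset.range (k + 1), ∑ ν ∈ Finset.Ico (2 ^ j) (2 ^ (j + 1)), g (x + n ν)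
            ≤ ∑ j ∈ Finset.range (k + 1), α / 4 * 2 ^ j :=
              Finset.sum_le_sum (fun j _ => hblock j)
          _ = α / 4 * (2 ^ (k + 1) - 1) := by rw [← Finset.mul_sum, hgeom]
      have hx0 : g (x + n 0) ≤ α / 2 := hxE
      have step3 : ((2:ℝ) ^ k)⁻¹ * ∑ ν ∈ Finset.range (2 ^ (k + 1)), g (x + n ν) ≤ α := by
        rw [hdec]
        have hbd : g (x + n 0) + ∑ j ∈ Finset.range (k + 1),
            ∑ ν ∈ Finset.Ico (2 ^ j) (2 ^ (j + 1)), g (x + n ν)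
            ≤ α / 2 + α / 4 * (2 ^ (k + 1) - 1) := add_le_add hx0 hsumblocks
        have := mul_le_mul_of_nonneg_left hbd (show (0:ℝ) ≤ ((2:ℝ) ^ k)⁻¹ by positivity)
        refine le_trans this ?_
        rw [mul_add]
        have e1 : ((2:ℝ) ^ k)⁻¹ * (α / 2) ≤ α / 2 := by
          have hone : (1:ℝ) ≤ 2 ^ k := one_le_pow₀ (by norm_num)
          have : ((2:ℝ) ^ k)⁻¹ ≤ 1 := by
            rw [inv_le_one_iff₀]; right; exact hone
          nlinarith
        have e2 : ((2:ℝ) ^ k)⁻¹ * (α / 4 * (2 ^ (k + 1) - 1)) ≤ α / 2 := by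
          have h21 : (2:ℝ) ^ (k + 1) - 1 ≤ 2 * 2 ^ k := by
            rw [pow_succ]; nlinarith [hp]
          have : ((2:ℝ) ^ k)⁻¹ * (α / 4 * (2 ^ (k + 1) - 1)) ≤
              ((2:ℝ) ^ k)⁻¹ * (α / 4 * (2 * 2 ^ k)) := by
            have h3 : α / 4 * ((2:ℝ) ^ (k + 1) - 1) ≤ α / 4 * (2 * 2 ^ k) := by nlinarith
            exact mul_le_mul_of_nonneg_left h3 (by positivity)
          refine le_trans this ?_
          rw [show ((2:ℝ) ^ k)⁻¹ * (α / 4 * (2 * 2 ^ k)) = α / 2 * (((2:ℝ) ^ k)⁻¹ * 2 ^ k) by ring,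
            inv_mul_cancel₀ (ne_of_gt hp), mul_one]
        linarith
      linarith [step1.trans_le (step2.trans step3)]
    have hUfin := hDfin.union hEfin
    have hfin := hUfin.subset hsub
    refine ⟨hfin, ?_⟩
    have hcard1 : hfin.toFinset.card ≤ hUfin.toFinset.card :=
      Finset.card_le_card (Set.Finite.toFinset_subset_toFinset.mpr hsub)
    have hcard2 : hUfin.toFinset.card ≤ hDfin.toFinset.card + hEfin.toFinset.card := by
      rw [Set.Finite.toFinset_union]
      exact Finset.card_union_le _ _
    have hT : (0:ℝ) ≤ ∑' x, |f x| := tsum_nonneg (fun x => abs_nonneg _)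
    have hD' : (hDfin.toFinset.card : ℝ) ≤ 4 * C * α⁻¹ * ∑' x, |f x| := by
      have : C * (α / 4)⁻¹ * ∑' x, |g x| = 4 * C * α⁻¹ * ∑' x, |f x| := by
        rw [hgt, inv_div]; ring
      linarith [hDcard, this.le, this.ge]
    have hE' : (hEfin.toFinset.card : ℝ) ≤ 2 * α⁻¹ * ∑' x, |f x| := by
      have : (α / 2)⁻¹ * ∑' x, |f (x + (n 0 : ℤ))| = 2 * α⁻¹ * ∑' x, |f x| := by
        rw [htsum0, inv_div]; ring
      linarith [hEcard, this.le]
    have : (hfin.toFinset.card : ℝ) ≤ (hDfin.toFinset.card : ℝ) + (hEfin.toFinset.card : ℝ) := by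
      exact_mod_cast hcard1.trans hcard2
    calc (hfin.toFinset.card : ℝ) ≤ (hDfin.toFinset.card : ℝ) + (hEfin.toFinset.card : ℝ) := this
      _ ≤ 4 * C * α⁻¹ * ∑' x, |f x| + 2 * α⁻¹ * ∑' x, |f x| := add_le_add hD' hE'
      _ = (4 * C + 2) * α⁻¹ * ∑' x, |f x| := by ring
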